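/- For every b > 0, the function f(x) = (2/B(b,b)) · e^{bx}/(1+e^x)^{2b} on (0,∞) integrates to 1, where B(b,b) is the Beta function. -/

import Mathlib

open MeasureTheory Real

noncomputable def Beta (a b : ℝ) : ℝ := Real.Gamma a * Real.Gamma b / Real.Gamma (a + b)

lemma real_betaIntegral (b : ℝ) (hb : 0 < b) :
    ∫ t in (0:ℝ)..1, t ^ (b - 1) * (1 - t) ^ (b - 1) = Beta b b := by
  have hre : 0 < Complex.re b := by simpa using hb
  have h := Complex.Gamma_mul_Gamma_eq_betaIntegral hre hre
  have hG : Complex.Gamma ((b : ℂ) + b) ≠ 0 := by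
    rw [show ((b:ℂ) + b) = ((b + b : ℝ) : ℂ) by push_cast; ring, Complex.Gamma_ofReal]
    exact_mod_cast (Real.Gamma_pos_of_pos (by linarith)).ne'
  have hBI : Complex.betaIntegral b b = ((Beta b b : ℝ) : ℂ) := by
    have : Complex.betaIntegral b b
        = Complex.Gamma b * Complex.Gamma b / Complex.Gamma ((b:ℂ) + b) := by
      rw [eq_div_iff hG, h]; ring
    rw [this, show ((b:ℂ) + b) = ((b + b : ℝ) : ℂ) by push_cast; ring,
      Complex.Gamma_ofReal, Complex.Gamma_ofReal]
    rw [Beta]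
    push_cast
    ring
  have heq : Complex.betaIntegral b b
      = ((∫ t in (0:ℝ)..1, t ^ (b - 1) * (1 - t) ^ (b - 1) : ℝ) : ℂ) := by
    rw [Complex.betaIntegral, ← intervalIntegral.integral_ofReal]
    refine intervalIntegral.integral_congr fun x hx => ?_
    rw [Set.uIcc_of_le (by norm_num : (0:ℝ) ≤ 1)] at hx
    have hx0 : 0 ≤ x := hx.1
    have hx1 : 0 ≤ 1 - x := by linarith [hx.2]
    push_cast [Complex.ofReal_cpow hx0, Complex.ofReal_cpow hx1]
    ring
  have := heq.symm.trans hBI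
  exact_mod_cast this

lemma real_beta_integrable (b : ℝ) (hb : 0 < b) :
    IntervalIntegrable (fun t : ℝ => t ^ (b - 1) * (1 - t) ^ (b - 1)) volume 0 1 := by
  have hre : 0 < Complex.re b := by simpa using hb
  have h := Complex.betaIntegral_convergent hre hre
  rw [intervalIntegrable_iff_integrableOn_Ioc_of_le (by norm_num)] at h ⊢
  have h2 : IntegrableOn
      (fun x : ℝ => (((x ^ (b-1) * (1-x) ^ (b-1) : ℝ)) : ℂ)) (Set.Ioc 0 1) volume := by
    refine h.congr_fun (fun x hx => ?_) measurableSet_Ioc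
    have hx0 : (0:ℝ) ≤ x := hx.1.le
    have hx1 : (0:ℝ) ≤ 1 - x := by linarith [hx.2]
    push_cast [Complex.ofReal_cpow hx0, Complex.ofReal_cpow hx1]
    ring
  have h3 : IntegrableOn
      (fun x : ℝ => (((x ^ (b-1) * (1-x) ^ (b-1) : ℝ)) : ℂ).re) (Set.Ioc 0 1) volume := h2.re
  refine h3.congr_fun (fun x _ => ?_) measurableSet_Ioc
  simp

lemma rpow_arith (b E V : ℝ) (hE : 0 < E) (hV : 0 < V) :
    E / V ^ 2 * (E ^ (b - 1) / V ^ (b - 1) * (1 / V ^ (b - 1))) = E ^ b / V ^ (2 * b) := by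
  have hexpb : E ^ (b - 1) * E = E ^ b := by
    nth_rewrite 2 [← Real.rpow_one E]
    rw [← Real.rpow_add hE]
    norm_num
  have hvb : V ^ (b - 1) * V ^ (b - 1) * V ^ (2 : ℕ) = V ^ (2 * b) := by
    rw [← Real.rpow_natCast V 2, ← Real.rpow_add hV, ← Real.rpow_add hV]
    push_cast
    congr 1
    ring
  calc E / V ^ 2 * (E ^ (b - 1) / V ^ (b - 1) * (1 / V ^ (b - 1)))
      = (E ^ (b - 1) * E) / (V ^ (b - 1) * V ^ (b - 1) * V ^ (2 : ℕ)) := by ring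
    _ = E ^ b / V ^ (2 * b) := by rw [hexpb, hvb]

theorem typeIII_half_logistic_density_integrates_to_one (b : ℝ) (hb : 0 < b) :
    ∫ x in Set.Ioi (0 : ℝ),
      (2 / Beta b b) * (Real.exp (b * x) / (1 + Real.exp x) ^ (2 * b)) = 1 := by
  set g : ℝ → ℝ := fun t => t ^ (b - 1) * (1 - t) ^ (b - 1) with hg
  set φ : ℝ → ℝ := fun x => Real.exp x / (1 + Real.exp x) with hφ
  have hden : ∀ x : ℝ, (0:ℝ) < 1 + Real.exp x := fun x => by positivity
  -- derivative
  have hderiv : ∀ x : ℝ, HasDerivAt φ (Real.exp x / (1 + Real.exp x) ^ 2) x := by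
    intro x
    have h1 : HasDerivAt (fun x => Real.exp x) (Real.exp x) x := Real.hasDerivAt_exp x
    have h2 : HasDerivAt (fun x => 1 + Real.exp x) (Real.exp x) x := by
      simpa using (Real.hasDerivAt_exp x).const_add 1
    have : HasDerivAt (fun y => Real.exp y / (1 + Real.exp y))
        ((Real.exp x * (1 + Real.exp x) - Real.exp x * Real.exp x) / (1 + Real.exp x) ^ 2) x :=
      h1.div h2 (hden x).ne'
    convert this using 1
    ring
  -- injectivity
  have hinj : Set.InjOn φ (Set.Ioi 0) := by
    intro a _ c _ hac
    have : Real.exp a * (1 + Real.exp c) = Real.exp c * (1 + Real.exp a) := by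
      have := hac
      rw [hφ] at this
      field_simp at this
      linarith [this]
    have : Real.exp a = Real.exp c := by nlinarith [Real.exp_pos a, Real.exp_pos c]
    exact Real.exp_injective this
  -- image
  have himg : φ '' Set.Ioi 0 = Set.Ioo (1/2 : ℝ) 1 := by
    ext y
    constructor
    · rintro ⟨x, hx, rfl⟩
      have hx0 : (0:ℝ) < x := hx
      have hx1 : 1 < Real.exp x := by
        rw [← Real.exp_zero]; exact Real.exp_lt_exp.mpr hx0
      constructor
      · rw [hφ, lt_div_iff₀ (hden x)]
        linarith
      · rw [hφ, div_lt_one (hden x)]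
        linarith [Real.exp_pos x]
    · rintro ⟨hy1, hy2⟩
      have hy0 : 0 < y := by linarith
      have h1y : 0 < 1 - y := by linarith
      refine ⟨Real.log (y / (1 - y)), ?_, ?_⟩
      · apply Real.log_pos
        rw [lt_div_iff₀ h1y]
        linarith
      · have hexp : Real.exp (Real.log (y / (1 - y))) = y / (1 - y) :=
          Real.exp_log (by positivity)
        show Real.exp (Real.log (y / (1 - y))) / (1 + Real.exp (Real.log (y / (1 - y)))) = y
        rw [hexp]
        field_simp
        ring
  -- change of variables
  have hchg : ∫ t in Set.Ioo (1/2 : ℝ) 1, g t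
      = ∫ x in Set.Ioi (0:ℝ), |Real.exp x / (1 + Real.exp x) ^ 2| • g (φ x) := by
    rw [← himg]
    exact integral_image_eq_integral_abs_deriv_smul measurableSet_Ioi
      (fun x _ => (hderiv x).hasDerivWithinAt) hinj g
  -- identify the integrand
  have hintegrand : ∀ x : ℝ,
      |Real.exp x / (1 + Real.exp x) ^ 2| • g (φ x)
        = Real.exp (b * x) / (1 + Real.exp x) ^ (2 * b) := by
    intro x
    have he : (0:ℝ) < Real.exp x := Real.exp_pos x
    have hv := hden x
    have hφx : φ x = Real.exp x / (1 + Real.exp x) := rfl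
    have h1φ : 1 - φ x = 1 / (1 + Real.exp x) := by
      rw [hφx]; field_simp
      ring
    rw [smul_eq_mul, abs_of_pos (by positivity), hg]
    simp only [h1φ]
    simp only [hφx]
    rw [Real.div_rpow he.le hv.le, Real.div_rpow (by norm_num) hv.le,
      Real.one_rpow, mul_comm b x, Real.exp_mul]
    exact rpow_arith b (Real.exp x) (1 + Real.exp x) he hv
  calc ∫ x in Set.Ioi (0 : ℝ),
        (2 / Beta b b) * (Real.exp (b * x) / (1 + Real.exp x) ^ (2 * b))
      = (2 / Beta b b) * ∫ x in Set.Ioi (0:ℝ),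
          Real.exp (b * x) / (1 + Real.exp x) ^ (2 * b) := integral_const_mul _ _
    _ = (2 / Beta b b) * ∫ t in Set.Ioo (1/2 : ℝ) 1, g t := by
        rw [hchg]
        congr 1
        exact setIntegral_congr_fun measurableSet_Ioi fun x _ => (hintegrand x).symm
    _ = 1 := by
        -- compute ∫ over Ioo (1/2) 1
        have hsplit : (∫ t in (0:ℝ)..(1/2:ℝ), g t) + (∫ t in (1/2:ℝ)..1, g t)
            = ∫ t in (0:ℝ)..1, g t := by
          apply intervalIntegral.integral_add_adjacent_intervals
          · exact (real_beta_integrable b hb).mono_set (by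
              rw [Set.uIcc_of_le (by norm_num : (0:ℝ) ≤ 1/2),
                Set.uIcc_of_le (by norm_num : (0:ℝ) ≤ 1)]
              exact Set.Icc_subset_Icc le_rfl (by norm_num))
          · exact (real_beta_integrable b hb).mono_set (by
              rw [Set.uIcc_of_le (by norm_num : (1/2:ℝ) ≤ 1),
                Set.uIcc_of_le (by norm_num : (0:ℝ) ≤ 1)]
              exact Set.Icc_subset_Icc (by norm_num) le_rfl)
        have hrefl : (∫ t in (0:ℝ)..(1/2:ℝ), g t) = ∫ t in (1/2:ℝ)..1, g t := by
          have h2 : (∫ t in (0:ℝ)..(1/2:ℝ), g (1 - t)) = ∫ t in (1/2:ℝ)..1, g t := by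
            rw [intervalIntegral.integral_comp_sub_left g 1]
            norm_num
          rw [← h2]
          refine intervalIntegral.integral_congr fun x _ => ?_
          simp only [hg, sub_sub_cancel]
          ring
        have hhalf : (∫ t in (1/2:ℝ)..1, g t) = Beta b b / 2 := by
          have h01 := real_betaIntegral b hb
          rw [← hg] at h01
          rw [← h01, ← hsplit, hrefl]; ring
        have hBpos : 0 < Beta b b := by
          rw [Beta]
          have := Real.Gamma_pos_of_pos hb
          have := Real.Gamma_pos_of_pos (show (0:ℝ) < b + b by linarith)
          positivity
        rw [show (∫ t in Set.Ioo (1/2:ℝ) 1, g t) = ∫ t in Set.Ioc (1/2:ℝ) 1, g t from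
          (MeasureTheory.integral_Ioc_eq_integral_Ioo).symm,
          ← intervalIntegral.integral_of_le (by norm_num : (1/2:ℝ) ≤ 1), hhalf]
        field_simp
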